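/- arXiv:math/0605746 — 2 statements merged into one kernel-verified Lean document; each statement's English description precedes it below -/
import Mathlib

section
/- Let p > 4 be an odd integer not divisible by 3. Then for every integer a ≥ 3p + 2, the square (a × a) can be tiled with squares (2 × 2), (3 × 3), and (p × p). -/
set_option maxHeartbeats 1000000


/-- The `a1 × a2` grid of unit cells is partitioned by axis-aligned translated
copies of bricks from `bricks` placed at integer positions.  A placement
`(x, y, w, h)` covers cells `(i, j)` with `x ≤ i < x + w` and `y ≤ j < y + h`. -/
def Tiles (bricks : Finset (ℕ × ℕ)) (a1 a2 : ℕ) : Prop :=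
  ∃ P : Finset (ℕ × ℕ × ℕ × ℕ),
    (∀ q ∈ P, (q.2.2.1, q.2.2.2) ∈ bricks ∧ q.1 + q.2.2.1 ≤ a1 ∧ q.2.1 + q.2.2.2 ≤ a2) ∧
    (∀ i j : ℕ, i < a1 → j < a2 →
      ∃! q : ℕ × ℕ × ℕ × ℕ, q ∈ P ∧
        q.1 ≤ i ∧ i < q.1 + q.2.2.1 ∧ q.2.1 ≤ j ∧ j < q.2.1 + q.2.2.2)

lemma tiles_nil_left {b : Finset (ℕ × ℕ)} (n : ℕ) : Tiles b 0 n :=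
  ⟨∅, by simp, fun i j hi _ => absurd hi (by omega)⟩

lemma tiles_nil_right {b : Finset (ℕ × ℕ)} (m : ℕ) : Tiles b m 0 :=
  ⟨∅, by simp, fun i j _ hj => absurd hj (by omega)⟩

lemma tiles_brick {b : Finset (ℕ × ℕ)} {w h : ℕ} (hb : (w, h) ∈ b) : Tiles b w h := by
  refine ⟨{(0, 0, w, h)}, ?_, ?_⟩
  · intro q hq
    simp only [Finset.mem_singleton] at hq
    subst hq
    exact ⟨hb, by dsimp only; omega, by dsimp only; omega⟩
  · intro i j hi hj
    refine ⟨(0, 0, w, h), ⟨by simp, by simp, by simpa using hi, by simp, by simpa using hj⟩, ?_⟩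
    rintro q ⟨hq, -⟩
    simpa using hq

/-- Gluing: if a finite set of axis-aligned rectangles partitions the big
rectangle and each is tileable, the big rectangle is tileable. -/
lemma tiles_glue {b : Finset (ℕ × ℕ)} {a1 a2 : ℕ} (R : Finset (ℕ × ℕ × ℕ × ℕ))
    (hsub : ∀ r ∈ R, r.1 + r.2.2.1 ≤ a1 ∧ r.2.1 + r.2.2.2 ≤ a2)
    (hcov : ∀ i j : ℕ, i < a1 → j < a2 →
      ∃! r : ℕ × ℕ × ℕ × ℕ, r ∈ R ∧ r.1 ≤ i ∧ i < r.1 + r.2.2.1 ∧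
        r.2.1 ≤ j ∧ j < r.2.1 + r.2.2.2)
    (ht : ∀ r ∈ R, Tiles b r.2.2.1 r.2.2.2) : Tiles b a1 a2 := by
  have ht' : ∀ r : ℕ × ℕ × ℕ × ℕ, ∃ P : Finset (ℕ × ℕ × ℕ × ℕ), r ∈ R →
      ((∀ q ∈ P, (q.2.2.1, q.2.2.2) ∈ b ∧ q.1 + q.2.2.1 ≤ r.2.2.1 ∧
          q.2.1 + q.2.2.2 ≤ r.2.2.2) ∧
        (∀ i j : ℕ, i < r.2.2.1 → j < r.2.2.2 →
          ∃! q : ℕ × ℕ × ℕ × ℕ, q ∈ P ∧ q.1 ≤ i ∧ i < q.1 + q.2.2.1 ∧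
            q.2.1 ≤ j ∧ j < q.2.1 + q.2.2.2)) := by
    intro r
    by_cases h : r ∈ R
    · obtain ⟨P, h1, h2⟩ := ht r h
      exact ⟨P, fun _ => ⟨h1, h2⟩⟩
    · exact ⟨∅, fun hr => absurd hr h⟩
  choose T hT using ht'
  refine ⟨R.biUnion fun r => (T r).image fun q => (r.1 + q.1, r.2.1 + q.2.1, q.2.2.1, q.2.2.2),
    ?_, ?_⟩
  · intro q hq
    simp only [Finset.mem_biUnion, Finset.mem_image] at hq
    obtain ⟨r, hr, q', hq', rfl⟩ := hq
    obtain ⟨hP, -⟩ := hT r hr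
    obtain ⟨hbq, hw, hh⟩ := hP q' hq'
    obtain ⟨hr1, hr2⟩ := hsub r hr
    exact ⟨hbq, by dsimp only; omega, by dsimp only; omega⟩
  · intro i j hi hj
    obtain ⟨r0, ⟨hr0, hrx1, hrx2, hry1, hry2⟩, hru⟩ := hcov i j hi hj
    obtain ⟨hP0, hc0⟩ := hT r0 hr0
    obtain ⟨q0, ⟨hq0, hqx1, hqx2, hqy1, hqy2⟩, hqu⟩ :=
      hc0 (i - r0.1) (j - r0.2.1) (by omega) (by omega)
    refine ⟨(r0.1 + q0.1, r0.2.1 + q0.2.1, q0.2.2.1, q0.2.2.2),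
      ⟨Finset.mem_biUnion.mpr ⟨r0, hr0, Finset.mem_image.mpr ⟨q0, hq0, rfl⟩⟩,
        by dsimp only; omega, by dsimp only; omega, by dsimp only; omega,
        by dsimp only; omega⟩, ?_⟩
    rintro q ⟨hq, e1, e2, e3, e4⟩
    simp only [Finset.mem_biUnion, Finset.mem_image] at hq
    obtain ⟨r, hr, q', hq', rfl⟩ := hq
    dsimp only at e1 e2 e3 e4
    obtain ⟨hP, -⟩ := hT r hr
    obtain ⟨-, hw', hh'⟩ := hP q' hq'
    have hrr : r = r0 := hru r ⟨hr, by omega, by omega, by omega, by omega⟩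
    subst hrr
    have hqq : q' = q0 := hqu q' ⟨hq', by omega, by omega, by omega, by omega⟩
    subst hqq
    rfl

lemma tiles_hcat {b : Finset (ℕ × ℕ)} {m1 m2 n : ℕ}
    (h1 : Tiles b m1 n) (h2 : Tiles b m2 n) : Tiles b (m1 + m2) n := by
  apply tiles_glue ({(0, 0, m1, n), (m1, 0, m2, n)} : Finset (ℕ × ℕ × ℕ × ℕ))
  · intro r hr
    simp only [Finset.mem_insert, Finset.mem_singleton] at hr
    rcases hr with rfl | rfl <;> exact ⟨by dsimp only; omega, by dsimp only; omega⟩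
  · intro i j hi hj
    by_cases h : i < m1
    · refine ⟨(0, 0, m1, n), ⟨by simp, by dsimp only; omega, by dsimp only; omega,
        by dsimp only; omega, by dsimp only; omega⟩, ?_⟩
      rintro q ⟨hq, e1, e2, e3, e4⟩
      simp only [Finset.mem_insert, Finset.mem_singleton] at hq
      rcases hq with rfl | rfl <;> dsimp only at e1 e2 e3 e4 <;>
        first | rfl | (exfalso; omega)
    · refine ⟨(m1, 0, m2, n), ⟨by simp, by dsimp only; omega, by dsimp only; omega,
        by dsimp only; omega, by dsimp only; omega⟩, ?_⟩
      rintro q ⟨hq, e1, e2, e3, e4⟩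
      simp only [Finset.mem_insert, Finset.mem_singleton] at hq
      rcases hq with rfl | rfl <;> dsimp only at e1 e2 e3 e4 <;>
        first | rfl | (exfalso; omega)
  · intro r hr
    simp only [Finset.mem_insert, Finset.mem_singleton] at hr
    rcases hr with rfl | rfl
    · exact h1
    · exact h2

lemma tiles_vcat {b : Finset (ℕ × ℕ)} {m n1 n2 : ℕ}
    (h1 : Tiles b m n1) (h2 : Tiles b m n2) : Tiles b m (n1 + n2) := by
  apply tiles_glue ({(0, 0, m, n1), (0, n1, m, n2)} : Finset (ℕ × ℕ × ℕ × ℕ))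
  · intro r hr
    simp only [Finset.mem_insert, Finset.mem_singleton] at hr
    rcases hr with rfl | rfl <;> exact ⟨by dsimp only; omega, by dsimp only; omega⟩
  · intro i j hi hj
    by_cases h : j < n1
    · refine ⟨(0, 0, m, n1), ⟨by simp, by dsimp only; omega, by dsimp only; omega,
        by dsimp only; omega, by dsimp only; omega⟩, ?_⟩
      rintro q ⟨hq, e1, e2, e3, e4⟩
      simp only [Finset.mem_insert, Finset.mem_singleton] at hq
      rcases hq with rfl | rfl <;> dsimp only at e1 e2 e3 e4 <;>
        first | rfl | (exfalso; omega)
    · refine ⟨(0, n1, m, n2), ⟨by simp, by dsimp only; omega, by dsimp only; omega,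
        by dsimp only; omega, by dsimp only; omega⟩, ?_⟩
      rintro q ⟨hq, e1, e2, e3, e4⟩
      simp only [Finset.mem_insert, Finset.mem_singleton] at hq
      rcases hq with rfl | rfl <;> dsimp only at e1 e2 e3 e4 <;>
        first | rfl | (exfalso; omega)
  · intro r hr
    simp only [Finset.mem_insert, Finset.mem_singleton] at hr
    rcases hr with rfl | rfl
    · exact h1
    · exact h2

lemma tiles_hrep {b : Finset (ℕ × ℕ)} {w n : ℕ} (h : Tiles b w n) :
    ∀ k : ℕ, Tiles b (w * k) n
  | 0 => by simpa using tiles_nil_left n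
  | (k + 1) => by
      have := tiles_hcat (tiles_hrep h k) h
      simpa [Nat.mul_succ] using this

lemma tiles_vrep {b : Finset (ℕ × ℕ)} {m h : ℕ} (ht : Tiles b m h) :
    ∀ k : ℕ, Tiles b m (h * k)
  | 0 => by simpa using tiles_nil_right m
  | (k + 1) => by
      have := tiles_vcat (tiles_vrep ht k) ht
      simpa [Nat.mul_succ] using this

lemma two_three_decomp {n : ℕ} (hn : 2 ≤ n) : ∃ j k, n = 2 * j + 3 * k := by
  rcases Nat.even_or_odd n with ⟨t, ht⟩ | ⟨t, ht⟩
  · exact ⟨t, 0, by omega⟩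
  · exact ⟨t - 1, 1, by omega⟩

lemma tiles_6_n {b : Finset (ℕ × ℕ)} (h2 : Tiles b 2 2) (h3 : Tiles b 3 3) {n : ℕ}
    (hn : 2 ≤ n) : Tiles b 6 n := by
  have t62 : Tiles b 6 2 := by simpa using tiles_hrep h2 3
  have t63 : Tiles b 6 3 := by simpa using tiles_hrep h3 2
  obtain ⟨j, k, rfl⟩ := two_three_decomp hn
  exact tiles_vcat (tiles_vrep t62 j) (tiles_vrep t63 k)

lemma tiles_n_6 {b : Finset (ℕ × ℕ)} (h2 : Tiles b 2 2) (h3 : Tiles b 3 3) {m : ℕ}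
    (hm : 2 ≤ m) : Tiles b m 6 := by
  have t26 : Tiles b 2 6 := by simpa using tiles_vrep h2 3
  have t36 : Tiles b 3 6 := by simpa using tiles_vrep h3 2
  obtain ⟨j, k, rfl⟩ := two_three_decomp hm
  exact tiles_hcat (tiles_hrep t26 j) (tiles_hrep t36 k)

lemma tiles_dvd6_left {b : Finset (ℕ × ℕ)} (h2 : Tiles b 2 2) (h3 : Tiles b 3 3)
    {m n : ℕ} (hm : 6 ∣ m) (hn : 2 ≤ n) : Tiles b m n := by
  obtain ⟨k, rfl⟩ := hm
  exact tiles_hrep (tiles_6_n h2 h3 hn) k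

lemma tiles_dvd6_right {b : Finset (ℕ × ℕ)} (h2 : Tiles b 2 2) (h3 : Tiles b 3 3)
    {m n : ℕ} (hm : 2 ≤ m) (hn : 6 ∣ n) : Tiles b m n := by
  obtain ⟨k, rfl⟩ := hn
  exact tiles_vrep (tiles_n_6 h2 h3 hm) k

/-- Pinwheel: a `(2d+c) × (2d+c)` square from a centered `c × c` square and four
`(d+c) × d` rectangles. -/
lemma tiles_pinwheel {b : Finset (ℕ × ℕ)} {d c : ℕ} (h0 : Tiles b c c)
    (h1 : Tiles b (d + c) d) (h2 : Tiles b d (d + c)) :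
    Tiles b (2 * d + c) (2 * d + c) := by
  apply tiles_glue ({(d, d, c, c), (0, 0, d + c, d), (d + c, 0, d, d + c),
    (d, d + c, d + c, d), (0, d, d, d + c)} : Finset (ℕ × ℕ × ℕ × ℕ))
  · intro r hr
    simp only [Finset.mem_insert, Finset.mem_singleton] at hr
    rcases hr with rfl | rfl | rfl | rfl | rfl <;>
      exact ⟨by dsimp only; omega, by dsimp only; omega⟩
  · intro i j hi hj
    by_cases hj1 : j < d
    · by_cases hi1 : i < d + c
      · refine ⟨(0, 0, d + c, d), ⟨by simp, by dsimp only; omega, by dsimp only; omega,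
          by dsimp only; omega, by dsimp only; omega⟩, ?_⟩
        rintro q ⟨hq, e1, e2, e3, e4⟩
        simp only [Finset.mem_insert, Finset.mem_singleton] at hq
        rcases hq with rfl | rfl | rfl | rfl | rfl <;> dsimp only at e1 e2 e3 e4 <;>
          first | rfl | (exfalso; omega)
      · refine ⟨(d + c, 0, d, d + c), ⟨by simp, by dsimp only; omega, by dsimp only; omega,
          by dsimp only; omega, by dsimp only; omega⟩, ?_⟩
        rintro q ⟨hq, e1, e2, e3, e4⟩
        simp only [Finset.mem_insert, Finset.mem_singleton] at hq
        rcases hq with rfl | rfl | rfl | rfl | rfl <;> dsimp only at e1 e2 e3 e4 <;>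
          first | rfl | (exfalso; omega)
    · by_cases hj2 : j < d + c
      · by_cases hi1 : i < d
        · refine ⟨(0, d, d, d + c), ⟨by simp, by dsimp only; omega, by dsimp only; omega,
            by dsimp only; omega, by dsimp only; omega⟩, ?_⟩
          rintro q ⟨hq, e1, e2, e3, e4⟩
          simp only [Finset.mem_insert, Finset.mem_singleton] at hq
          rcases hq with rfl | rfl | rfl | rfl | rfl <;> dsimp only at e1 e2 e3 e4 <;>
            first | rfl | (exfalso; omega)
        · by_cases hi2 : i < d + c
          · refine ⟨(d, d, c, c), ⟨by simp, by dsimp only; omega, by dsimp only; omega,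
              by dsimp only; omega, by dsimp only; omega⟩, ?_⟩
            rintro q ⟨hq, e1, e2, e3, e4⟩
            simp only [Finset.mem_insert, Finset.mem_singleton] at hq
            rcases hq with rfl | rfl | rfl | rfl | rfl <;> dsimp only at e1 e2 e3 e4 <;>
              first | rfl | (exfalso; omega)
          · refine ⟨(d + c, 0, d, d + c), ⟨by simp, by dsimp only; omega, by dsimp only; omega,
              by dsimp only; omega, by dsimp only; omega⟩, ?_⟩
            rintro q ⟨hq, e1, e2, e3, e4⟩
            simp only [Finset.mem_insert, Finset.mem_singleton] at hq
            rcases hq with rfl | rfl | rfl | rfl | rfl <;> dsimp only at e1 e2 e3 e4 <;>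
              first | rfl | (exfalso; omega)
      · by_cases hi1 : i < d
        · refine ⟨(0, d, d, d + c), ⟨by simp, by dsimp only; omega, by dsimp only; omega,
            by dsimp only; omega, by dsimp only; omega⟩, ?_⟩
          rintro q ⟨hq, e1, e2, e3, e4⟩
          simp only [Finset.mem_insert, Finset.mem_singleton] at hq
          rcases hq with rfl | rfl | rfl | rfl | rfl <;> dsimp only at e1 e2 e3 e4 <;>
            first | rfl | (exfalso; omega)
        · refine ⟨(d, d + c, d + c, d), ⟨by simp, by dsimp only; omega, by dsimp only; omega,
            by dsimp only; omega, by dsimp only; omega⟩, ?_⟩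
          rintro q ⟨hq, e1, e2, e3, e4⟩
          simp only [Finset.mem_insert, Finset.mem_singleton] at hq
          rcases hq with rfl | rfl | rfl | rfl | rfl <;> dsimp only at e1 e2 e3 e4 <;>
            first | rfl | (exfalso; omega)
  · intro r hr
    simp only [Finset.mem_insert, Finset.mem_singleton] at hr
    rcases hr with rfl | rfl | rfl | rfl | rfl
    · exact h0
    · exact h1
    · exact h2
    · exact h1
    · exact h2

/-- for odd p > 4 not divisible by 3, every square of side
a ≥ 3p + 2 can be tiled with 2×2, 3×3 and p×p squares. -/
theorem tiling_square_23p (p : ℕ) (hp4 : 4 < p) (hodd : Odd p) (h3 : ¬ (3 ∣ p)) :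
    ∀ a : ℕ, 3 * p + 2 ≤ a → Tiles {(2, 2), (3, 3), (p, p)} a a := by
  intro a ha
  have t22 : Tiles ({(2, 2), (3, 3), (p, p)} : Finset (ℕ × ℕ)) 2 2 := tiles_brick (by simp)
  have t33 : Tiles ({(2, 2), (3, 3), (p, p)} : Finset (ℕ × ℕ)) 3 3 := tiles_brick (by simp)
  have tpp : Tiles ({(2, 2), (3, 3), (p, p)} : Finset (ℕ × ℕ)) p p := tiles_brick (by simp)
  rw [Nat.odd_iff] at hodd
  by_cases ha2 : 2 ∣ a
  · obtain ⟨k, rfl⟩ := ha2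
    exact tiles_hrep (tiles_vrep t22 k) k
  · by_cases ha3 : 3 ∣ a
    · obtain ⟨k, rfl⟩ := ha3
      exact tiles_hrep (tiles_vrep t33 k) k
    · -- a odd, not divisible by 3
      have hcase : a % 12 = p % 12 ∨ (a + p) % 12 = 0 ∨ a % 12 = (p + 6) % 12 ∨
          (a + p + 6) % 12 = 0 := by
        have hA : a % 12 = 1 ∨ a % 12 = 5 ∨ a % 12 = 7 ∨ a % 12 = 11 := by omega
        have hP : p % 12 = 1 ∨ p % 12 = 5 ∨ p % 12 = 7 ∨ p % 12 = 11 := by omega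
        rcases hA with h | h | h | h <;> rcases hP with h' | h' | h' | h' <;> omega
      have tin : Tiles ({(2, 2), (3, 3), (p, p)} : Finset (ℕ × ℕ)) (p + 6) (p + 6) := by
        have tp6 : Tiles ({(2, 2), (3, 3), (p, p)} : Finset (ℕ × ℕ)) p (p + 6) :=
          tiles_vcat tpp (tiles_dvd6_right t22 t33 (by omega) ⟨1, rfl⟩)
        have t6p : Tiles ({(2, 2), (3, 3), (p, p)} : Finset (ℕ × ℕ)) 6 (p + 6) :=
          tiles_dvd6_left t22 t33 ⟨1, rfl⟩ (by omega)
        exact tiles_hcat tp6 t6p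
      rcases hcase with h | h | h | h
      · obtain ⟨d, hda, hd⟩ : ∃ d, a = 2 * d + p ∧ 6 ∣ d :=
          ⟨(a - p) / 2, by omega, by omega⟩
        have h1 := tiles_dvd6_right t22 t33 (m := d + p) (by omega) hd
        have h2 := tiles_dvd6_left t22 t33 (n := d + p) hd (by omega)
        rw [hda]
        exact tiles_pinwheel tpp h1 h2
      · obtain ⟨d, hda, hd⟩ : ∃ d, a = 2 * d + p ∧ 6 ∣ (d + p) :=
          ⟨(a - p) / 2, by omega, by omega⟩
        have h1 := tiles_dvd6_left t22 t33 (n := d) hd (by omega)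
        have h2 := tiles_dvd6_right t22 t33 (m := d) (by omega) hd
        rw [hda]
        exact tiles_pinwheel tpp h1 h2
      · obtain ⟨d, hda, hd⟩ : ∃ d, a = 2 * d + (p + 6) ∧ 6 ∣ d :=
          ⟨(a - (p + 6)) / 2, by omega, by omega⟩
        have h1 := tiles_dvd6_right t22 t33 (m := d + (p + 6)) (by omega) hd
        have h2 := tiles_dvd6_left t22 t33 (n := d + (p + 6)) hd (by omega)
        rw [hda]
        exact tiles_pinwheel tin h1 h2
      · obtain ⟨d, hda, hd⟩ : ∃ d, a = 2 * d + (p + 6) ∧ 6 ∣ (d + (p + 6)) :=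
          ⟨(a - (p + 6)) / 2, by omega, by omega⟩
        have h1 := tiles_dvd6_left t22 t33 (n := d) hd (by omega)
        have h2 := tiles_dvd6_right t22 t33 (m := d) (by omega) hd
        rw [hda]
        exact tiles_pinwheel tin h1 h2
end

section
/- A square (a × a) can be tiled with squares (2 × 2), (3 × 3), and (7 × 7) if and only if a ∉ {1, 5, 11}. -/
set_option maxRecDepth 100000


/-! ### A decidable checker for explicit tilings -/

lemma tiles_of_checker (bricks : Finset (ℕ × ℕ)) (a1 a2 : ℕ) (P : Finset (ℕ × ℕ × ℕ × ℕ))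
    (h1 : ∀ q ∈ P, (q.2.2.1, q.2.2.2) ∈ bricks ∧ q.1 + q.2.2.1 ≤ a1 ∧ q.2.1 + q.2.2.2 ≤ a2)
    (h2 : ∀ i < a1, ∀ j < a2, (P.filter (fun q =>
        q.1 ≤ i ∧ i < q.1 + q.2.2.1 ∧ q.2.1 ≤ j ∧ j < q.2.1 + q.2.2.2)).card = 1) :
    Tiles bricks a1 a2 := by
  refine ⟨P, h1, fun i j hi hj => ?_⟩
  obtain ⟨q, hq⟩ := Finset.card_eq_one.mp (h2 i hi j hj)
  have hqmem : q ∈ P.filter (fun q =>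
      q.1 ≤ i ∧ i < q.1 + q.2.2.1 ∧ q.2.1 ≤ j ∧ j < q.2.1 + q.2.2.2) := by
    rw [hq]; exact Finset.mem_singleton_self q
  obtain ⟨hqP, hqc⟩ := Finset.mem_filter.mp hqmem
  refine ⟨q, ⟨hqP, hqc⟩, ?_⟩
  intro q' ⟨hq'P, hq'c⟩
  have : q' ∈ P.filter (fun q =>
      q.1 ≤ i ∧ i < q.1 + q.2.2.1 ∧ q.2.1 ≤ j ∧ j < q.2.1 + q.2.2.2) :=
    Finset.mem_filter.mpr ⟨hq'P, hq'c⟩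
  rw [hq] at this
  exact Finset.mem_singleton.mp this

/-! ### Concatenation lemmas -/

lemma tiles_concatH {bricks : Finset (ℕ × ℕ)} {a1 a1' a2 : ℕ}
    (h : Tiles bricks a1 a2) (h' : Tiles bricks a1' a2) :
    Tiles bricks (a1 + a1') a2 := by
  obtain ⟨P, hP1, hP2⟩ := h
  obtain ⟨Q, hQ1, hQ2⟩ := h'
  refine ⟨P ∪ Q.image (fun q => (q.1 + a1, q.2)), ?_, ?_⟩
  · intro q hq
    rcases Finset.mem_union.mp hq with hq | hq
    · obtain ⟨hb, hx, hy⟩ := hP1 q hq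
      exact ⟨hb, by omega, hy⟩
    · obtain ⟨r, hr, rfl⟩ := Finset.mem_image.mp hq
      obtain ⟨hb, hx, hy⟩ := hQ1 r hr
      exact ⟨hb, by dsimp only; omega, hy⟩
  · intro i j hi hj
    by_cases hcase : i < a1
    · obtain ⟨q, ⟨hqP, hcov⟩, huniq⟩ := hP2 i j hcase hj
      refine ⟨q, ⟨Finset.mem_union_left _ hqP, hcov⟩, ?_⟩
      rintro q' ⟨hq', hcov'⟩
      rcases Finset.mem_union.mp hq' with hq'' | hq''
      · exact huniq q' ⟨hq'', hcov'⟩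
      · exfalso
        obtain ⟨r, hr, rfl⟩ := Finset.mem_image.mp hq''
        dsimp only at hcov'
        omega
    · push_neg at hcase
      obtain ⟨q, ⟨hqQ, hcov⟩, huniq⟩ := hQ2 (i - a1) j (by omega) hj
      obtain ⟨c1, c2, c3, c4⟩ := hcov
      refine ⟨(q.1 + a1, q.2), ⟨Finset.mem_union_right _ (Finset.mem_image_of_mem _ hqQ),
        ?_⟩, ?_⟩
      · dsimp only
        exact ⟨by omega, by omega, c3, c4⟩
      · rintro q' ⟨hq', hcov'⟩
        rcases Finset.mem_union.mp hq' with hq'' | hq''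
        · exfalso
          obtain ⟨hb, hx, hy⟩ := hP1 q' hq''
          omega
        · obtain ⟨r, hr, rfl⟩ := Finset.mem_image.mp hq''
          dsimp only at hcov' ⊢
          obtain ⟨d1, d2, d3, d4⟩ := hcov'
          have : r = q := huniq r ⟨hr, by omega, by omega, d3, d4⟩
          rw [this]

lemma tiles_concatV {bricks : Finset (ℕ × ℕ)} {a1 a2 a2' : ℕ}
    (h : Tiles bricks a1 a2) (h' : Tiles bricks a1 a2') :
    Tiles bricks a1 (a2 + a2') := by
  obtain ⟨P, hP1, hP2⟩ := h
  obtain ⟨Q, hQ1, hQ2⟩ := h'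
  refine ⟨P ∪ Q.image (fun q => (q.1, q.2.1 + a2, q.2.2)), ?_, ?_⟩
  · intro q hq
    rcases Finset.mem_union.mp hq with hq | hq
    · obtain ⟨hb, hx, hy⟩ := hP1 q hq
      exact ⟨hb, hx, by omega⟩
    · obtain ⟨r, hr, rfl⟩ := Finset.mem_image.mp hq
      obtain ⟨hb, hx, hy⟩ := hQ1 r hr
      exact ⟨hb, hx, by dsimp only; omega⟩
  · intro i j hi hj
    by_cases hcase : j < a2
    · obtain ⟨q, ⟨hqP, hcov⟩, huniq⟩ := hP2 i j hi hcase
      refine ⟨q, ⟨Finset.mem_union_left _ hqP, hcov⟩, ?_⟩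
      rintro q' ⟨hq', hcov'⟩
      rcases Finset.mem_union.mp hq' with hq'' | hq''
      · exact huniq q' ⟨hq'', hcov'⟩
      · exfalso
        obtain ⟨r, hr, rfl⟩ := Finset.mem_image.mp hq''
        dsimp only at hcov'
        omega
    · push_neg at hcase
      obtain ⟨q, ⟨hqQ, hcov⟩, huniq⟩ := hQ2 i (j - a2) hi (by omega)
      obtain ⟨c1, c2, c3, c4⟩ := hcov
      refine ⟨(q.1, q.2.1 + a2, q.2.2), ⟨Finset.mem_union_right _ (Finset.mem_image_of_mem _ hqQ),
        ?_⟩, ?_⟩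
      · dsimp only
        exact ⟨c1, c2, by omega, by omega⟩
      · rintro q' ⟨hq', hcov'⟩
        rcases Finset.mem_union.mp hq' with hq'' | hq''
        · exfalso
          obtain ⟨hb, hx, hy⟩ := hP1 q' hq''
          omega
        · obtain ⟨r, hr, rfl⟩ := Finset.mem_image.mp hq''
          dsimp only at hcov' ⊢
          obtain ⟨d1, d2, d3, d4⟩ := hcov'
          have : r = q := huniq r ⟨hr, d1, d2, by omega, by omega⟩
          rw [this]

/-! ### Base tilings -/

def P17 : Finset (ℕ × ℕ × ℕ × ℕ) :=
  {(0, 5, 2, 2), (0, 7, 2, 2), (0, 9, 2, 2), (2, 5, 3, 3), (2, 8, 3, 3),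
   (0, 11, 2, 2), (0, 13, 2, 2), (0, 15, 2, 2), (2, 11, 3, 3), (2, 14, 3, 3),
   (12, 0, 2, 2), (12, 2, 2, 2), (12, 4, 2, 2), (14, 0, 3, 3), (14, 3, 3, 3),
   (12, 6, 2, 2), (12, 8, 2, 2), (12, 10, 2, 2), (14, 6, 3, 3), (14, 9, 3, 3),
   (0, 0, 2, 2), (2, 0, 2, 2), (4, 0, 2, 2), (0, 2, 3, 3), (3, 2, 3, 3),
   (6, 0, 2, 2), (8, 0, 2, 2), (10, 0, 2, 2), (6, 2, 3, 3), (9, 2, 3, 3),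
   (5, 12, 2, 2), (7, 12, 2, 2), (9, 12, 2, 2), (5, 14, 3, 3), (8, 14, 3, 3),
   (11, 12, 2, 2), (13, 12, 2, 2), (15, 12, 2, 2), (11, 14, 3, 3), (14, 14, 3, 3),
   (5, 5, 7, 7)}

lemma sq2 : Tiles {(2, 2), (3, 3), (7, 7)} 2 2 :=
  tiles_of_checker _ 2 2 {(0, 0, 2, 2)} (by decide) (by decide)

lemma sq3 : Tiles {(2, 2), (3, 3), (7, 7)} 3 3 :=
  tiles_of_checker _ 3 3 {(0, 0, 3, 3)} (by decide) (by decide)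

lemma sq7 : Tiles {(2, 2), (3, 3), (7, 7)} 7 7 :=
  tiles_of_checker _ 7 7 {(0, 0, 7, 7)} (by decide) (by decide)

lemma sq17 : Tiles {(2, 2), (3, 3), (7, 7)} 17 17 :=
  tiles_of_checker _ 17 17 P17 (by decide) (by decide)

lemma sq4 : Tiles {(2, 2), (3, 3), (7, 7)} 4 4 :=
  tiles_concatV (tiles_concatH sq2 sq2) (tiles_concatH sq2 sq2)

lemma r62 : Tiles {(2, 2), (3, 3), (7, 7)} 6 2 :=
  tiles_concatH (tiles_concatH sq2 sq2) sq2

lemma r63 : Tiles {(2, 2), (3, 3), (7, 7)} 6 3 :=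
  tiles_concatH sq3 sq3

lemma r26 : Tiles {(2, 2), (3, 3), (7, 7)} 2 6 :=
  tiles_concatV (tiles_concatV sq2 sq2) sq2

lemma r36 : Tiles {(2, 2), (3, 3), (7, 7)} 3 6 :=
  tiles_concatV sq3 sq3

lemma t6n (n : ℕ) (h : 2 ≤ n) : Tiles {(2, 2), (3, 3), (7, 7)} 6 n := by
  induction n using Nat.strong_induction_on with
  | _ n ih =>
    match n, h with
    | 2, _ => exact r62
    | 3, _ => exact r63
    | (m + 4), _ => exact tiles_concatV (a2 := m + 2) (a2' := 2) (ih (m + 2) (by omega) (by omega)) r62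

lemma tn6 (n : ℕ) (h : 2 ≤ n) : Tiles {(2, 2), (3, 3), (7, 7)} n 6 := by
  induction n using Nat.strong_induction_on with
  | _ n ih =>
    match n, h with
    | 2, _ => exact r26
    | 3, _ => exact r36
    | (m + 4), _ => exact tiles_concatH (a1 := m + 2) (a1' := 2) (ih (m + 2) (by omega) (by omega)) r26

lemma sq6 : Tiles {(2, 2), (3, 3), (7, 7)} 6 6 := t6n 6 (by omega)

lemma add6 {s : ℕ} (hs : 2 ≤ s) (h : Tiles {(2, 2), (3, 3), (7, 7)} s s) :
    Tiles {(2, 2), (3, 3), (7, 7)} (s + 6) (s + 6) :=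
  tiles_concatV (tiles_concatH h (t6n s hs)) (tn6 (s + 6) (by omega))

lemma tiles_pos : ∀ a : ℕ, 2 ≤ a → a ≠ 5 → a ≠ 11 →
    Tiles {(2, 2), (3, 3), (7, 7)} a a := by
  intro a
  induction a using Nat.strong_induction_on with
  | _ a ih =>
    intro h2 h5 h11
    rcases Nat.lt_or_ge a 18 with h | h
    · interval_cases a
      · exact sq2
      · exact sq3
      · exact sq4
      · exact absurd rfl h5
      · exact sq6
      · exact sq7
      · exact add6 (by omega) sq2
      · exact add6 (by omega) sq3
      · exact add6 (by omega) sq4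
      · exact absurd rfl h11
      · exact add6 (by omega) sq6
      · exact add6 (by omega) sq7
      · exact add6 (by omega) (add6 (by omega) sq2)
      · exact add6 (by omega) (add6 (by omega) sq3)
      · exact add6 (by omega) (add6 (by omega) sq4)
      · exact sq17
    · have ht := ih (a - 6) (by omega) (by omega) (by omega) (by omega)
      have := add6 (by omega) ht
      have e : a - 6 + 6 = a := by omega
      rwa [e] at this

/-! ### The counting identity for impossibility proofs -/

lemma tiling_sum_eq {a1 a2 : ℕ} {P : Finset (ℕ × ℕ × ℕ × ℕ)}
    (hcov : ∀ i j : ℕ, i < a1 → j < a2 →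
      ∃! q : ℕ × ℕ × ℕ × ℕ, q ∈ P ∧
        q.1 ≤ i ∧ i < q.1 + q.2.2.1 ∧ q.2.1 ≤ j ∧ j < q.2.1 + q.2.2.2)
    (w : ℕ → ℕ → ℤ) :
    ∑ c ∈ Finset.range a1 ×ˢ Finset.range a2, w c.1 c.2
      = ∑ q ∈ P, ∑ c ∈ (Finset.range a1 ×ˢ Finset.range a2).filter
          (fun c => q.1 ≤ c.1 ∧ c.1 < q.1 + q.2.2.1 ∧ q.2.1 ≤ c.2 ∧ c.2 < q.2.1 + q.2.2.2),
          w c.1 c.2 := by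
  have h1 : ∀ c ∈ Finset.range a1 ×ˢ Finset.range a2,
      ∑ q ∈ P, (if q.1 ≤ c.1 ∧ c.1 < q.1 + q.2.2.1 ∧ q.2.1 ≤ c.2 ∧ c.2 < q.2.1 + q.2.2.2
        then w c.1 c.2 else 0) = w c.1 c.2 := by
    intro c hc
    simp only [Finset.mem_product, Finset.mem_range] at hc
    obtain ⟨q0, hq0, huniq⟩ := hcov c.1 c.2 hc.1 hc.2
    have hfil : P.filter (fun q =>
        q.1 ≤ c.1 ∧ c.1 < q.1 + q.2.2.1 ∧ q.2.1 ≤ c.2 ∧ c.2 < q.2.1 + q.2.2.2) = {q0} := by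
      apply Finset.eq_singleton_iff_unique_mem.mpr
      refine ⟨Finset.mem_filter.mpr ⟨hq0.1, hq0.2⟩, ?_⟩
      intro x hx
      obtain ⟨hx1, hx2⟩ := Finset.mem_filter.mp hx
      exact huniq x ⟨hx1, hx2⟩
    rw [← Finset.sum_filter, hfil, Finset.sum_singleton]
  calc ∑ c ∈ Finset.range a1 ×ˢ Finset.range a2, w c.1 c.2
      = ∑ c ∈ Finset.range a1 ×ˢ Finset.range a2, ∑ q ∈ P,
          (if q.1 ≤ c.1 ∧ c.1 < q.1 + q.2.2.1 ∧ q.2.1 ≤ c.2 ∧ c.2 < q.2.1 + q.2.2.2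
            then w c.1 c.2 else 0) := (Finset.sum_congr rfl h1).symm
    _ = ∑ q ∈ P, ∑ c ∈ Finset.range a1 ×ˢ Finset.range a2,
          (if q.1 ≤ c.1 ∧ c.1 < q.1 + q.2.2.1 ∧ q.2.1 ≤ c.2 ∧ c.2 < q.2.1 + q.2.2.2
            then w c.1 c.2 else 0) := Finset.sum_comm
    _ = _ := Finset.sum_congr rfl (fun q _ => (Finset.sum_filter _ _).symm)

/-! ### Weight certificates -/

def L5 : List (List Int) :=
  [[1, 1, 1, 1, 1],
  [1, -3, 1, -3, 1],
  [1, 1, -4, 1, 1],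
  [1, -3, 1, -3, 1],
  [1, 1, 1, 1, 1]]

def w5 (i j : ℕ) : ℤ := (L5.getD i []).getD j 0

def L11 : List (List Int) :=
  [[8, -1, -3, 0, 8, -6, 8, 0, -3, -1, 8],
  [-1, -6, 10, -7, -1, -1, -1, -7, 10, -6, -1],
  [-3, 10, -16, 13, -5, -1, -5, 13, -16, 10, -3],
  [0, -7, 13, -10, 2, 4, 2, -10, 13, -7, 0],
  [8, -1, -5, 2, 6, -12, 6, 2, -5, -1, 8],
  [-6, -1, -1, 4, -12, 16, -12, 4, -1, -1, -6],
  [8, -1, -5, 2, 6, -12, 6, 2, -5, -1, 8],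
  [0, -7, 13, -10, 2, 4, 2, -10, 13, -7, 0],
  [-3, 10, -16, 13, -5, -1, -5, 13, -16, 10, -3],
  [-1, -6, 10, -7, -1, -1, -1, -7, 10, -6, -1],
  [8, -1, -3, 0, 8, -6, 8, 0, -3, -1, 8]]

def w11 (i j : ℕ) : ℤ := (L11.getD i []).getD j 0

lemma total5 : ∑ c ∈ Finset.range 5 ×ˢ Finset.range 5, w5 c.1 c.2 = 4 := by decide

lemma bound5_2 : ∀ x < 4, ∀ y < 4,
    ∑ c ∈ (Finset.range 5 ×ˢ Finset.range 5).filter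
      (fun c => x ≤ c.1 ∧ c.1 < x + 2 ∧ y ≤ c.2 ∧ c.2 < y + 2), w5 c.1 c.2 ≤ 0 := by decide

lemma bound5_3 : ∀ x < 3, ∀ y < 3,
    ∑ c ∈ (Finset.range 5 ×ˢ Finset.range 5).filter
      (fun c => x ≤ c.1 ∧ c.1 < x + 3 ∧ y ≤ c.2 ∧ c.2 < y + 3), w5 c.1 c.2 ≤ 0 := by decide

lemma total11 : ∑ c ∈ Finset.range 11 ×ˢ Finset.range 11, w11 c.1 c.2 = 8 := by decide

lemma bound11_2 : ∀ x < 10, ∀ y < 10,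
    ∑ c ∈ (Finset.range 11 ×ˢ Finset.range 11).filter
      (fun c => x ≤ c.1 ∧ c.1 < x + 2 ∧ y ≤ c.2 ∧ c.2 < y + 2), w11 c.1 c.2 ≤ 0 := by decide

lemma bound11_3 : ∀ x < 9, ∀ y < 9,
    ∑ c ∈ (Finset.range 11 ×ˢ Finset.range 11).filter
      (fun c => x ≤ c.1 ∧ c.1 < x + 3 ∧ y ≤ c.2 ∧ c.2 < y + 3), w11 c.1 c.2 ≤ 0 := by decide

lemma bound11_7 : ∀ x < 5, ∀ y < 5,
    ∑ c ∈ (Finset.range 11 ×ˢ Finset.range 11).filter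
      (fun c => x ≤ c.1 ∧ c.1 < x + 7 ∧ y ≤ c.2 ∧ c.2 < y + 7), w11 c.1 c.2 ≤ 0 := by decide

/-! ### Impossibility -/

lemma not1 : ¬ Tiles {(2, 2), (3, 3), (7, 7)} 1 1 := by
  rintro ⟨P, h1, h2⟩
  obtain ⟨q, ⟨hqP, hcov⟩, -⟩ := h2 0 0 (by norm_num) (by norm_num)
  obtain ⟨hb, hx, hy⟩ := h1 q hqP
  simp only [Finset.mem_insert, Finset.mem_singleton, Prod.mk.injEq] at hb
  omega

lemma not5 : ¬ Tiles {(2, 2), (3, 3), (7, 7)} 5 5 := by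
  rintro ⟨P, h1, h2⟩
  have hkey := tiling_sum_eq h2 w5
  rw [total5] at hkey
  have hle : ∑ q ∈ P, ∑ c ∈ (Finset.range 5 ×ˢ Finset.range 5).filter
      (fun c => q.1 ≤ c.1 ∧ c.1 < q.1 + q.2.2.1 ∧ q.2.1 ≤ c.2 ∧ c.2 < q.2.1 + q.2.2.2),
      w5 c.1 c.2 ≤ 0 := by
    apply Finset.sum_nonpos
    intro q hq
    obtain ⟨hb, hx, hy⟩ := h1 q hq
    obtain ⟨x, y, u, v⟩ := q
    simp only [Finset.mem_insert, Finset.mem_singleton, Prod.mk.injEq] at hb hx hy ⊢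
    rcases hb with ⟨rfl, rfl⟩ | ⟨rfl, rfl⟩ | ⟨rfl, rfl⟩
    · exact bound5_2 x (by omega) y (by omega)
    · exact bound5_3 x (by omega) y (by omega)
    · omega
  omega

lemma not11 : ¬ Tiles {(2, 2), (3, 3), (7, 7)} 11 11 := by
  rintro ⟨P, h1, h2⟩
  have hkey := tiling_sum_eq h2 w11
  rw [total11] at hkey
  have hle : ∑ q ∈ P, ∑ c ∈ (Finset.range 11 ×ˢ Finset.range 11).filter
      (fun c => q.1 ≤ c.1 ∧ c.1 < q.1 + q.2.2.1 ∧ q.2.1 ≤ c.2 ∧ c.2 < q.2.1 + q.2.2.2),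
      w11 c.1 c.2 ≤ 0 := by
    apply Finset.sum_nonpos
    intro q hq
    obtain ⟨hb, hx, hy⟩ := h1 q hq
    obtain ⟨x, y, u, v⟩ := q
    simp only [Finset.mem_insert, Finset.mem_singleton, Prod.mk.injEq] at hb hx hy ⊢
    rcases hb with ⟨rfl, rfl⟩ | ⟨rfl, rfl⟩ | ⟨rfl, rfl⟩
    · exact bound11_2 x (by omega) y (by omega)
    · exact bound11_3 x (by omega) y (by omega)
    · exact bound11_7 x (by omega) y (by omega)
  omega

/-- a square of side a ≥ 1 can be tiled with 2×2, 3×3 and 7×7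
squares if and only if a ∉ {1, 5, 11}. -/
theorem tiling_square_237 (a : ℕ) (ha : 1 ≤ a) :
    Tiles {(2, 2), (3, 3), (7, 7)} a a ↔ a ≠ 1 ∧ a ≠ 5 ∧ a ≠ 11 := by
  constructor
  · intro h
    refine ⟨?_, ?_, ?_⟩ <;> rintro rfl
    · exact not1 h
    · exact not5 h
    · exact not11 h
  · rintro ⟨h1, h5, h11⟩
    exact tiles_pos a (by omega) h5 h11
end
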